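/- arXiv:2410.07664 — 2 statements merged into one kernel-verified Lean document; each statement's English description precedes it below -/
import Mathlib

section
/- Let R : ℝ → (0,∞) be continuous and z ∈ ℝ. For a càdlàg path w : [0,∞) → ℝ define the transform Φ_z(w)_t = z + w_{h_z(t)}, where h_z(t) = inf{s ≥ 0 : ∫_0^s R(w_u)/R(z+w_u) du > t}. Then for every path w (on its interval of definition before the lifetime), Φ_{-z}(Φ_z(w)) = w, i.e. the transforms Φ_z and Φ_{-z} are mutually inverse. -/
open MeasureTheory Set Filter

/-- The additive functional `s ↦ ∫_0^s g(u) du`. -/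
noncomputable def timeInt (g : ℝ → ℝ) (s : ℝ) : ℝ := ∫ u in Set.Ioc 0 s, g u

/-- The generalized inverse time-change `h(t) = inf{s ≥ 0 : ∫_0^s g > t}`. -/
noncomputable def timeChange (g : ℝ → ℝ) (t : ℝ) : ℝ := sInf {s : ℝ | 0 ≤ s ∧ t < timeInt g s}

/-- The space-time transform `Φ_z(w)_t = z + w_{h_z(t)}` with
`h_z(t) = inf{s ≥ 0 : ∫_0^s R(w_u)/R(z+w_u) du > t}`. -/
noncomputable def Phi (R : ℝ → ℝ) (z : ℝ) (w : ℝ → ℝ) : ℝ → ℝ :=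
  fun t => z + w (timeChange (fun u => R (w u) / R (z + w u)) t)

section Aux

variable {G : ℝ → ℝ}

lemma timeInt_of_nonpos {s : ℝ} (hs : s ≤ 0) : timeInt G s = 0 := by
  unfold timeInt
  rw [Set.Ioc_eq_empty (not_lt.2 hs)]
  simp

lemma timeInt_mono (hGpos : ∀ u, 0 < G u)
    (hGint : ∀ s : ℝ, IntegrableOn G (Set.Ioc 0 s)) : Monotone (timeInt G) := by
  intro s t hst
  rcases le_or_gt t 0 with ht | ht
  · rw [timeInt_of_nonpos (hst.trans ht), timeInt_of_nonpos ht]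
  rcases le_or_gt s 0 with hs | hs
  · rw [timeInt_of_nonpos hs]
    exact setIntegral_nonneg measurableSet_Ioc fun u _ => (hGpos u).le
  · exact setIntegral_mono_set (hGint t)
      (Filter.Eventually.of_forall fun u => (hGpos u).le)
      (Filter.Eventually.of_forall (Set.Ioc_subset_Ioc_right hst))

lemma timeInt_nonneg (hGpos : ∀ u, 0 < G u) (s : ℝ) : 0 ≤ timeInt G s :=
  setIntegral_nonneg measurableSet_Ioc fun u _ => (hGpos u).le

lemma timeInt_add {s t : ℝ} (hGint : ∀ s : ℝ, IntegrableOn G (Set.Ioc 0 s))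
    (hs : 0 ≤ s) (hst : s ≤ t) :
    timeInt G t = timeInt G s + ∫ u in Set.Ioc s t, G u := by
  unfold timeInt
  rw [← setIntegral_union (Set.Ioc_disjoint_Ioc_of_le le_rfl) measurableSet_Ioc
      ((hGint t).mono_set (Set.Ioc_subset_Ioc_right hst))
      ((hGint t).mono_set (Set.Ioc_subset_Ioc_left hs)),
    Set.Ioc_union_Ioc_eq_Ioc hs hst]

lemma timeInt_strictMonoOn (hGpos : ∀ u, 0 < G u)
    (hGint : ∀ s : ℝ, IntegrableOn G (Set.Ioc 0 s)) :
    StrictMonoOn (timeInt G) (Set.Ici 0) := by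
  intro s hs t ht hst
  have h1 := timeInt_add (G := G) hGint hs hst.le
  have h2 : 0 < ∫ u in Set.Ioc s t, G u := by
    rw [setIntegral_pos_iff_support_of_nonneg_ae
      (Filter.Eventually.of_forall fun u => (hGpos u).le)
      ((hGint t).mono_set (Set.Ioc_subset_Ioc_left hs))]
    have hsup : Function.support G ∩ Set.Ioc s t = Set.Ioc s t :=
      Set.inter_eq_self_of_subset_right fun u _ => (hGpos u).ne'
    rw [hsup, Real.volume_Ioc]
    simp [hst]
  linarith

lemma timeInt_continuousOn (hGint : ∀ s : ℝ, IntegrableOn G (Set.Ioc 0 s)) (b : ℝ) :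
    ContinuousOn (timeInt G) (Set.Icc 0 b) :=
  intervalIntegral.continuousOn_primitive
    ((integrableOn_Icc_iff_integrableOn_Ioc).2 (hGint b))

variable (hGpos : ∀ u, 0 < G u)
  (hGint : ∀ s : ℝ, IntegrableOn G (Set.Ioc 0 s))
  (hGdiv : Filter.Tendsto (timeInt G) Filter.atTop Filter.atTop)

include hGpos hGint hGdiv

lemma timeChange_set_nonempty (t : ℝ) : {s : ℝ | 0 ≤ s ∧ t < timeInt G s}.Nonempty := by
  obtain ⟨s, hs⟩ := (hGdiv.eventually (eventually_gt_atTop t)).exists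
  exact ⟨max s 0, le_max_right _ _,
    hs.trans_le (timeInt_mono hGpos hGint (le_max_left _ _))⟩

omit hGdiv in
lemma timeChange_set_bddBelow (t : ℝ) : BddBelow {s : ℝ | 0 ≤ s ∧ t < timeInt G s} :=
  ⟨0, fun _ hx => hx.1⟩

lemma timeChange_nonneg (t : ℝ) : 0 ≤ timeChange G t :=
  le_csInf (timeChange_set_nonempty hGpos hGint hGdiv t) fun _ hx => hx.1

lemma timeChange_mono : Monotone (timeChange G) := fun t t' htt' =>
  csInf_le_csInf (timeChange_set_bddBelow hGpos hGint t)
    (timeChange_set_nonempty hGpos hGint hGdiv t')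
    (fun s hs => ⟨hs.1, htt'.trans_lt hs.2⟩)

lemma timeInt_timeChange {t : ℝ} (ht : 0 ≤ t) : timeInt G (timeChange G t) = t := by
  have hc0 : 0 ≤ timeChange G t := timeChange_nonneg hGpos hGint hGdiv t
  have hne := timeChange_set_nonempty hGpos hGint hGdiv t
  have hbdd := timeChange_set_bddBelow (G := G) hGpos hGint t
  set c := timeChange G t with hc
  rcases lt_trichotomy (timeInt G c) t with hlt | heq | hgt
  · exfalso
    have hcont : ContinuousWithinAt (timeInt G) (Set.Icc 0 (c + 1)) c :=
      timeInt_continuousOn hGint (c + 1) c ⟨hc0, by linarith⟩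
    have hev : ∀ᶠ x in nhdsWithin c (Set.Icc 0 (c + 1)), timeInt G x < t :=
      hcont.eventually (eventually_lt_nhds hlt)
    obtain ⟨ε, hε, hev⟩ := Metric.mem_nhdsWithin_iff.1 hev
    obtain ⟨s, hsS, hslt⟩ :=
      Real.lt_sInf_add_pos hne (lt_min hε one_pos)
    have hslt' : s < c + min ε 1 := hslt
    have hcs : c ≤ s := csInf_le hbdd hsS
    have hmε : min ε 1 ≤ ε := min_le_left _ _
    have hm1 : min ε 1 ≤ 1 := min_le_right _ _
    have hs1 : s ∈ Set.Icc 0 (c + 1) := ⟨hsS.1, by linarith⟩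
    have hds : dist s c < ε := by
      rw [Real.dist_eq, abs_of_nonneg (by linarith)]
      linarith
    exact absurd hsS.2 (not_lt.2 (hev ⟨Metric.mem_ball.2 hds, hs1⟩).le)
  · exact heq
  · exfalso
    have hcpos : 0 < c := by
      rcases hc0.lt_or_eq with h | h
      · exact h
      · rw [← h, timeInt_of_nonpos le_rfl] at hgt; linarith
    have hcont : ContinuousWithinAt (timeInt G) (Set.Icc 0 c) c :=
      timeInt_continuousOn hGint c c ⟨hc0, le_rfl⟩
    have hev : ∀ᶠ x in nhdsWithin c (Set.Icc 0 c), t < timeInt G x :=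
      hcont.eventually (eventually_gt_nhds hgt)
    obtain ⟨ε, hε, hev⟩ := Metric.mem_nhdsWithin_iff.1 hev
    set x := max 0 (c - ε / 2) with hx
    have hx0 : 0 ≤ x := le_max_left _ _
    have hxc : x ≤ c := max_le hcpos.le (by linarith)
    have hxlt : x < c := max_lt hcpos (by linarith)
    have hdx : dist x c < ε := by
      rw [Real.dist_eq, abs_of_nonpos (by linarith)]
      have : c - ε / 2 ≤ x := le_max_right _ _
      linarith
    have hxS : x ∈ {s : ℝ | 0 ≤ s ∧ t < timeInt G s} :=
      ⟨hx0, hev ⟨Metric.mem_ball.2 hdx, hx0, hxc⟩⟩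
    exact absurd (csInf_le hbdd hxS) (not_le.2 hxlt)

omit hGdiv in
lemma timeChange_timeInt {x : ℝ} (hx : 0 ≤ x) : timeChange G (timeInt G x) = x := by
  have hset : {s : ℝ | 0 ≤ s ∧ timeInt G x < timeInt G s} = Set.Ioi x := by
    ext s
    simp only [Set.mem_setOf_eq, Set.mem_Ioi]
    constructor
    · rintro ⟨hs0, hs⟩
      by_contra hsx
      exact absurd (timeInt_mono hGpos hGint (not_lt.1 hsx)) (not_le.2 hs)
    · intro hxs
      exact ⟨hx.trans hxs.le, timeInt_strictMonoOn hGpos hGint hx (hx.trans hxs.le) hxs⟩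
  rw [timeChange, hset, csInf_Ioi]

lemma timeChange_le_iff {u b : ℝ} (hu : 0 ≤ u) (hb : 0 ≤ b) :
    timeChange G u ≤ b ↔ u ≤ timeInt G b := by
  constructor
  · intro h
    calc u = timeInt G (timeChange G u) := (timeInt_timeChange hGpos hGint hGdiv hu).symm
    _ ≤ timeInt G b := timeInt_mono hGpos hGint h
  · intro h
    calc timeChange G u ≤ timeChange G (timeInt G b) :=
        timeChange_mono hGpos hGint hGdiv h
    _ = b := timeChange_timeInt hGpos hGint hb

lemma timeChange_measurable : Measurable (timeChange G) := by
  have : Monotone (timeChange G) := timeChange_mono hGpos hGint hGdiv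
  exact this.measurable

lemma timeChange_pos {u : ℝ} (hu : 0 < u) : 0 < timeChange G u := by
  rcases (timeChange_nonneg hGpos hGint hGdiv u).lt_or_eq with h | h
  · exact h
  · exfalso
    have := timeInt_timeChange hGpos hGint hGdiv hu.le
    rw [← h, timeInt_of_nonpos le_rfl] at this
    linarith

/-- Key substitution lemma. -/
lemma key_integral {v : ℝ} (hv : 0 ≤ v) :
    ∫ u in Set.Ioc 0 (timeInt G v), (G (timeChange G u))⁻¹ = v := by
  have hmeas : Measurable (timeChange G) := timeChange_measurable hGpos hGint hGdiv
  have hA0 : ∀ s, 0 ≤ timeInt G s := timeInt_nonneg hGpos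
  have hmono : Monotone (timeInt G) := timeInt_mono hGpos hGint
  haveI : IsFiniteMeasure (volume.restrict (Set.Ioc 0 (timeInt G v))) :=
    ⟨by rw [Measure.restrict_apply_univ, Real.volume_Ioc]; exact ENNReal.ofReal_lt_top⟩
  haveI : IsFiniteMeasure (Measure.map (timeChange G) (volume.restrict (Set.Ioc 0 (timeInt G v)))) :=
    Measure.isFiniteMeasure_map _ _
  have hmapeq : Measure.map (timeChange G) (volume.restrict (Set.Ioc 0 (timeInt G v)))
      = (volume.restrict (Set.Ioc 0 v)).withDensity
        (fun x => ((G x).toNNReal : ENNReal)) := by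
    refine Measure.ext_of_Ioc _ _ (fun a b hab => ?_)
    rw [Measure.map_apply hmeas measurableSet_Ioc, Measure.restrict_apply
      (hmeas measurableSet_Ioc)]
    have hsets : timeChange G ⁻¹' Set.Ioc a b ∩ Set.Ioc 0 (timeInt G v)
        = Set.Ioc (timeInt G (max a 0)) (timeInt G (min b v)) := by
      ext u
      simp only [Set.mem_inter_iff, Set.mem_preimage, Set.mem_Ioc]
      constructor
      · rintro ⟨⟨hau, hub⟩, hu0, huTv⟩
        have hu0' : 0 ≤ u := hu0.le
        have hhu0 : 0 < timeChange G u := by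
          rcases (timeChange_nonneg hGpos hGint hGdiv u).lt_or_eq with h' | h'
          · exact h'
          · exfalso
            have := timeInt_timeChange hGpos hGint hGdiv hu0'
            rw [← h', timeInt_of_nonpos le_rfl] at this
            linarith
        have hhuv : timeChange G u ≤ v := (timeChange_le_iff hGpos hGint hGdiv hu0' hv).2 huTv
        constructor
        · -- timeInt G (max a 0) < u
          have ha' : max a 0 < timeChange G u := max_lt hau hhu0
          by_contra hcon
          have : timeChange G u ≤ max a 0 :=
            (timeChange_le_iff hGpos hGint hGdiv hu0' (le_max_right a 0)).2 (not_lt.1 hcon)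
          exact absurd this (not_le.2 ha')
        · -- u ≤ timeInt G (min b v)
          have hb' : 0 ≤ min b v := le_min (hhu0.le.trans hub) hv
          exact (timeChange_le_iff hGpos hGint hGdiv hu0' hb').1 (le_min hub hhuv)
      · rintro ⟨hau, hub⟩
        have hu0 : 0 < u := (hA0 (max a 0)).trans_lt hau
        have hb0 : 0 ≤ min b v := by
          by_contra hcon
          rw [timeInt_of_nonpos (not_le.1 hcon).le] at hub
          linarith
        have huh : timeChange G u ≤ min b v := (timeChange_le_iff hGpos hGint hGdiv hu0.le hb0).2 hub
        refine ⟨⟨?_, huh.trans (min_le_left _ _)⟩, hu0,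
          hub.trans (hmono (min_le_right _ _))⟩
        -- a < h u
        by_contra hcon
        have hha : timeChange G u ≤ max a 0 :=
          le_max_of_le_left (not_lt.1 hcon)
        have := (timeChange_le_iff hGpos hGint hGdiv hu0.le (le_max_right a 0)).1 hha
        exact absurd hau (not_lt.2 this)
    rw [hsets, Real.volume_Ioc]
    rw [withDensity_apply _ measurableSet_Ioc, Measure.restrict_restrict measurableSet_Ioc,
      Set.Ioc_inter_Ioc]
    rw [show a ⊔ 0 = max a 0 from rfl, show b ⊓ v = min b v from rfl]
    have hcoe : ∀ r : ℝ, ((r.toNNReal : ENNReal)) = ENNReal.ofReal r := fun r => rfl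
    simp only [hcoe]
    rcases le_or_gt (max a 0) (min b v) with hcase | hcase
    · rw [← ofReal_integral_eq_lintegral_ofReal
        ((hGint (min b v)).mono_set (Set.Ioc_subset_Ioc_left (le_max_right a 0)))
        (Filter.Eventually.of_forall fun u => (hGpos u).le)]
      · congr 1
        have := timeInt_add (G := G) hGint (le_max_right a 0) hcase
        linarith [this]
    · rw [Set.Ioc_eq_empty (not_lt.2 hcase.le), Measure.restrict_empty, lintegral_zero_measure]
      rw [ENNReal.ofReal_eq_zero.2]
      have := hmono hcase.le
      linarith [this]
  -- now the integral computation
  have hGaesm : AEStronglyMeasurable G (volume.restrict (Set.Ioc 0 v)) :=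
    (hGint v).aestronglyMeasurable
  have htoNN : AEMeasurable (fun x => (G x).toNNReal) (volume.restrict (Set.Ioc 0 v)) :=
    measurable_real_toNNReal.comp_aemeasurable hGaesm.aemeasurable
  have hinvm : AEStronglyMeasurable (fun x => (G x)⁻¹)
      ((volume.restrict (Set.Ioc 0 v)).withDensity (fun x => ((G x).toNNReal : ENNReal))) :=
    (hGaesm.aemeasurable.inv.aestronglyMeasurable).mono_ac (withDensity_absolutelyContinuous _ _)
  calc ∫ u in Set.Ioc 0 (timeInt G v), (G (timeChange G u))⁻¹
      = ∫ x, (fun y => (G y)⁻¹) x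
        ∂(Measure.map (timeChange G) (volume.restrict (Set.Ioc 0 (timeInt G v)))) := by
        rw [integral_map hmeas.aemeasurable (hmapeq ▸ hinvm)]
    _ = ∫ x, (G x)⁻¹
        ∂((volume.restrict (Set.Ioc 0 v)).withDensity (fun x => ((G x).toNNReal : ENNReal))) := by
        rw [hmapeq]
    _ = ∫ x in Set.Ioc 0 v, (G x).toNNReal • (G x)⁻¹ :=
        integral_withDensity_eq_integral_smul₀ htoNN _
    _ = ∫ x in Set.Ioc 0 v, (1 : ℝ) := by
        refine setIntegral_congr_fun measurableSet_Ioc (fun x _ => ?_)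
        rw [NNReal.smul_def, Real.coe_toNNReal _ (hGpos x).le, smul_eq_mul, mul_inv_cancel₀ (hGpos x).ne']
    _ = v := by
        rw [setIntegral_const, Real.volume_real_Ioc_of_le hv, smul_eq_mul, mul_one,
          sub_zero]

end Aux

/-- The transforms `Φ_z` and `Φ_{-z}` are mutually inverse on paths. -/
theorem phi_neg_phi (R : ℝ → ℝ) (hRpos : ∀ x, 0 < R x) (hRcont : Continuous R)
    (z : ℝ) (w : ℝ → ℝ)
    (hw : ∀ t : ℝ, 0 ≤ t → ContinuousWithinAt w (Set.Ici t) t)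
    (hwl : ∀ t : ℝ, 0 < t → ∃ l : ℝ, Filter.Tendsto w (nhdsWithin t (Set.Iio t)) (nhds l))
    (hfin : ∀ s : ℝ, MeasureTheory.IntegrableOn
      (fun u => R (w u) / R (z + w u)) (Set.Ioc 0 s))
    (hdiv : Filter.Tendsto (timeInt (fun u => R (w u) / R (z + w u)))
      Filter.atTop Filter.atTop) :
    ∀ t : ℝ, 0 ≤ t → Phi R (-z) (Phi R z w) t = w t := by
  intro t ht
  set G : ℝ → ℝ := fun u => R (w u) / R (z + w u) with hG
  have hGpos : ∀ u, 0 < G u := fun u => div_pos (hRpos _) (hRpos _)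
  have hGint : ∀ s : ℝ, IntegrableOn G (Set.Ioc 0 s) := hfin
  have hGdiv : Filter.Tendsto (timeInt G) Filter.atTop Filter.atTop := hdiv
  have hG' : (fun u => R ((Phi R z w) u) / R (-z + (Phi R z w) u))
      = fun u => (G (timeChange G u))⁻¹ := by
    funext u
    show R (z + w (timeChange G u)) / R (-z + (z + w (timeChange G u)))
      = (G (timeChange G u))⁻¹
    rw [show -z + (z + w (timeChange G u)) = w (timeChange G u) by ring]
    rw [hG, inv_div]
  -- timeInt of the inverse density equals the timeChange
  have hA' : ∀ s : ℝ, 0 ≤ s →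
      timeInt (fun u => (G (timeChange G u))⁻¹) s = timeChange G s := by
    intro s hs
    have := key_integral hGpos hGint hGdiv (timeChange_nonneg hGpos hGint hGdiv s)
    rwa [timeInt_timeChange hGpos hGint hGdiv hs] at this
  have htc : timeChange (fun u => (G (timeChange G u))⁻¹) t = timeInt G t := by
    have hset : {s : ℝ | 0 ≤ s ∧ t < timeInt (fun u => (G (timeChange G u))⁻¹) s}
        = Set.Ioi (timeInt G t) := by
      ext s
      simp only [Set.mem_setOf_eq, Set.mem_Ioi]
      constructor
      · rintro ⟨hs0, hs⟩
        rw [hA' s hs0] at hs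
        calc timeInt G t
            < timeInt G (timeChange G s) :=
              timeInt_strictMonoOn hGpos hGint ht
                (timeChange_nonneg hGpos hGint hGdiv s) hs
          _ = s := timeInt_timeChange hGpos hGint hGdiv hs0
      · intro hst
        have hs0 : 0 ≤ s := (timeInt_nonneg hGpos t).trans hst.le
        refine ⟨hs0, ?_⟩
        rw [hA' s hs0]
        by_contra hcon
        have : s ≤ timeInt G t :=
          (timeChange_le_iff hGpos hGint hGdiv hs0 ht).1 (not_lt.1 hcon)
        exact absurd hst (not_lt.2 this)
    rw [timeChange, hset, csInf_Ioi]
  show -z + (Phi R z w) (timeChange (fun u => R ((Phi R z w) u) / R (-z + (Phi R z w) u)) t) = w t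
  rw [hG', htc]
  show -z + (z + w (timeChange G (timeInt G t))) = w t
  rw [timeChange_timeInt hGpos hGint ht]
  ring
end

section
/- Let R : ℝ → (0,∞), z ∈ ℝ, and let w be a càdlàg path such that h_z(t) = inf{s : ∫_0^s R(w_u)/R(z+w_u) du > t} is a continuous strictly increasing bijection from [0,ζ') onto [0,ζ). For b ∈ ℝ set T_b(w) = inf{t : w_t < b}. If T_b(w) < ζ, then T_{z+b}(Φ_z(w)) < ζ' and (z+b) − Φ_z(w)_{T_{z+b}(Φ_z(w))} = b − w_{T_b(w)}; i.e. the undershoot below any level is unchanged by the time-space transform Φ_z. -/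
open MeasureTheory Set Filter

/-- The first passage time of a path below a level `b`. -/
noncomputable def passage (w : ℝ → ℝ) (b : ℝ) : ℝ := sInf {t : ℝ | 0 ≤ t ∧ w t < b}

/-- The undershoot below any level is unchanged by the transform `Φ_z`:
if `T_b(w) < ζ` then `T_{z+b}(Φ_z(w)) < ζ'` and
`(z+b) − Φ_z(w)_{T_{z+b}(Φ_z(w))} = b − w_{T_b(w)}`. -/
theorem phi_undershoot (R : ℝ → ℝ) (hRpos : ∀ x, 0 < R x) (z : ℝ) (w : ℝ → ℝ)
    (ζ ζ' : ℝ) (hζ' : 0 < ζ')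
    (hw : ∀ t : ℝ, 0 ≤ t → ContinuousWithinAt w (Set.Ici t) t)
    (hbij : Set.BijOn (timeChange (fun u => R (w u) / R (z + w u)))
      (Set.Ico 0 ζ') (Set.Ico 0 ζ))
    (hmono : StrictMonoOn (timeChange (fun u => R (w u) / R (z + w u)))
      (Set.Ico 0 ζ'))
    (hcont : ContinuousOn (timeChange (fun u => R (w u) / R (z + w u)))
      (Set.Ico 0 ζ'))
    (b : ℝ) (hhit : ∃ t ∈ Set.Ico 0 ζ, w t < b) (hT : passage w b < ζ) :
    passage (Phi R z w) (z + b) < ζ' ∧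
      (z + b) - Phi R z w (passage (Phi R z w) (z + b)) = b - w (passage w b) := by
  classical
  set g : ℝ → ℝ := fun u => R (w u) / R (z + w u) with hg
  set h : ℝ → ℝ := timeChange g with hh
  set S : Set ℝ := {t : ℝ | 0 ≤ t ∧ w t < b} with hS
  set S' : Set ℝ := {t : ℝ | 0 ≤ t ∧ Phi R z w t < z + b} with hS'
  have hPhi : ∀ t, Phi R z w t = z + w (h t) := fun t => rfl
  have hTdef : passage w b = sInf S := rfl
  have hT'def : passage (Phi R z w) (z + b) = sInf S' := rfl
  set T : ℝ := sInf S with hT0def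
  set T' : ℝ := sInf S' with hT'0def
  rw [hTdef] at hT
  rw [hTdef, hT'def]
  have hSbdd : BddBelow S := ⟨0, fun x hx => hx.1⟩
  have hS'bdd : BddBelow S' := ⟨0, fun x hx => hx.1⟩
  obtain ⟨s0, hs0mem, hs0b⟩ := hhit
  have hSne : S.Nonempty := ⟨s0, hs0mem.1, hs0b⟩
  have hTnn : 0 ≤ T := le_csInf hSne (fun x hx => hx.1)
  -- for each s ∈ S with s < ζ, find preimage τ ∈ S' ∩ Ico 0 ζ'
  have hpre : ∀ s, s ∈ S → s < ζ → ∃ τ, τ ∈ Set.Ico 0 ζ' ∧ τ ∈ S' ∧ h τ = s := by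
    intro s hsS hsζ
    obtain ⟨τ, hτmem, hτeq⟩ := hbij.surjOn ⟨hsS.1, hsζ⟩
    refine ⟨τ, hτmem, ⟨hτmem.1, ?_⟩, hτeq⟩
    rw [hPhi, hτeq]
    exact add_lt_add_right hsS.2 z
  have hS'ne : S'.Nonempty := by
    obtain ⟨τ, _, hτS', _⟩ := hpre s0 ⟨hs0mem.1, hs0b⟩ hs0mem.2
    exact ⟨τ, hτS'⟩
  have hT'nn : 0 ≤ T' := le_csInf hS'ne (fun x hx => hx.1)
  -- T' < ζ'
  have hT'lt : T' < ζ' := by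
    obtain ⟨s, hsS, hslt⟩ := exists_lt_of_csInf_lt hSne hT
    obtain ⟨τ, hτmem, hτS', _⟩ := hpre s hsS hslt
    exact lt_of_le_of_lt (csInf_le hS'bdd hτS') hτmem.2
  have hT'mem : T' ∈ Set.Ico (0:ℝ) ζ' := ⟨hT'nn, hT'lt⟩
  have hmono' := hmono.monotoneOn
  -- h T' ≤ T
  have hle : h T' ≤ T := by
    refine le_of_forall_pos_le_add (fun ε hε => ?_)
    have hε' : 0 < min ε (ζ - T) := lt_min hε (by linarith)
    obtain ⟨s, hsS, hslt⟩ := exists_lt_of_csInf_lt hSne (lt_add_of_pos_right T hε')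
    have hsζ : s < ζ := by
      have := min_le_right ε (ζ - T)
      linarith
    obtain ⟨τ, hτmem, hτS', hτeq⟩ := hpre s hsS hsζ
    have hT'τ : T' ≤ τ := csInf_le hS'bdd hτS'
    have : h T' ≤ h τ := hmono' hT'mem hτmem hT'τ
    have := min_le_left ε (ζ - T)
    rw [hτeq] at *
    linarith
  -- T ≤ h T'
  have hge : T ≤ h T' := by
    have key : ∀ ε, 0 < ε → T' + ε < ζ' → T ≤ h (T' + ε) := by
      intro ε hε hltζ'
      obtain ⟨t, htS', htlt⟩ := exists_lt_of_csInf_lt hS'ne (lt_add_of_pos_right T' hε)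
      have htmem : t ∈ Set.Ico (0:ℝ) ζ' := ⟨htS'.1, htlt.trans hltζ'⟩
      have hht : h t ∈ Set.Ico (0:ℝ) ζ := hbij.mapsTo htmem
      have hhtS : h t ∈ S := by
        refine ⟨hht.1, ?_⟩
        have := htS'.2
        rw [hPhi] at this
        linarith
      have h1 : T ≤ h t := csInf_le hSbdd hhtS
      have h2 : h t ≤ h (T' + ε) :=
        hmono' htmem ⟨by linarith [htS'.1, hε, hT'nn], hltζ'⟩ htlt.le
      linarith
    -- use continuity of h within Ico 0 ζ' at T'
    have hct : ContinuousWithinAt h (Set.Ico 0 ζ') T' := hcont T' hT'mem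
    have htend : Tendsto (fun ε : ℝ => h (T' + ε)) (nhdsWithin 0 (Set.Ioo 0 (ζ' - T')))
        (nhds (h T')) := by
      apply hct.tendsto.comp
      rw [tendsto_nhdsWithin_iff]
      constructor
      · have : Tendsto (fun ε : ℝ => T' + ε) (nhds 0) (nhds (T' + 0)) :=
          (continuous_const.add continuous_id).tendsto 0
        rw [add_zero] at this
        exact this.mono_left nhdsWithin_le_nhds
      · filter_upwards [self_mem_nhdsWithin] with ε hε
        exact ⟨by linarith [hε.1, hT'nn], by linarith [hε.2]⟩
    have hne : (nhdsWithin (0:ℝ) (Set.Ioo 0 (ζ' - T'))).NeBot := by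
      refine mem_closure_iff_nhdsWithin_neBot.mp ?_
      rw [closure_Ioo (by linarith : (0:ℝ) ≠ ζ' - T')]
      exact ⟨le_refl 0, by linarith⟩
    refine ge_of_tendsto htend ?_
    filter_upwards [self_mem_nhdsWithin] with ε hε
    exact key ε hε.1 (by linarith [hε.2])
  have heq : h T' = T := le_antisymm hle hge
  refine ⟨hT'lt, ?_⟩
  rw [hPhi, heq]
  ring
end
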